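/- Let X be a topological space, R a commutative Banach ring, K₀, K₁ ⊆ X subsets, and for a subset S ⊆ X let I_S = {f : X → R continuous with finite image | f|_S = 0}. Then I_{K₀} · I_{K₁} = I_{K₀ ∪ K₁} = I_{K₀} ∩ I_{K₁}, where I_{K₀} · I_{K₁} denotes the ideal product. -/

import Mathlib

variable (X R : Type*) [TopologicalSpace X] [NormedCommRing R] [CompleteSpace R]

/-- The ring of continuous functions `X → R` with finite image. -/
def Cfin : Subring (X → R) where
  carrier := {f | Continuous f ∧ (Set.range f).Finite}
  mul_mem' {a b} ha hb := ⟨ha.1.mul hb.1,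
    (Set.Finite.image2 (· * ·) ha.2 hb.2).subset (by
      rintro _ ⟨x, rfl⟩
      exact Set.mem_image2_of_mem (Set.mem_range_self x) (Set.mem_range_self x))⟩
  one_mem' := ⟨continuous_const, Set.finite_range_const⟩
  add_mem' {a b} ha hb := ⟨ha.1.add hb.1,
    (Set.Finite.image2 (· + ·) ha.2 hb.2).subset (by
      rintro _ ⟨x, rfl⟩
      exact Set.mem_image2_of_mem (Set.mem_range_self x) (Set.mem_range_self x))⟩
  zero_mem' := ⟨continuous_const, Set.finite_range_const⟩
  neg_mem' {a} ha := ⟨ha.1.neg, (ha.2.image Neg.neg).subset (by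
      rintro _ ⟨x, rfl⟩
      exact ⟨a x, Set.mem_range_self x, rfl⟩)⟩

/-- The ideal of finite-image continuous functions vanishing on `S ⊆ X`. -/
def vanIdeal (S : Set X) : Ideal (Cfin X R) where
  carrier := {f | ∀ x ∈ S, f.1 x = 0}
  add_mem' {a b} ha hb x hx := by
    show a.1 x + b.1 x = 0
    rw [ha x hx, hb x hx, add_zero]
  zero_mem' x _ := rfl
  smul_mem' c f hf x hx := by
    show c.1 x * f.1 x = 0
    rw [hf x hx, mul_zero]

lemma mem_vanIdeal {X R : Type*} [TopologicalSpace X] [NormedCommRing R] [CompleteSpace R]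
    {S : Set X} {f : Cfin X R} : f ∈ vanIdeal X R S ↔ ∀ x ∈ S, f.1 x = 0 := Iff.rfl

set_option synthInstance.maxHeartbeats 1000000 in
/-- `I_{K₀} · I_{K₁} = I_{K₀ ∪ K₁} = I_{K₀} ∩ I_{K₁}` for the vanishing ideals of the ring
of finite-image continuous functions `X → R`. -/
theorem stmt7 (K₀ K₁ : Set X) :
    vanIdeal X R K₀ * vanIdeal X R K₁ = vanIdeal X R (K₀ ∪ K₁) ∧
    vanIdeal X R (K₀ ∪ K₁) = vanIdeal X R K₀ ⊓ vanIdeal X R K₁ := by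
  classical
  have h2 : vanIdeal X R (K₀ ∪ K₁) = vanIdeal X R K₀ ⊓ vanIdeal X R K₁ := by
    ext f
    simp only [mem_vanIdeal, Ideal.mem_inf, Set.mem_union, or_imp, forall_and]
  refine ⟨le_antisymm ?_ ?_, h2⟩
  · rw [h2]; exact Ideal.mul_le_inf
  · intro f hf
    have hfc : Continuous f.1 := f.2.1
    -- the zero set of f is clopen
    have hZclosed : IsClosed {x | f.1 x = 0} := isClosed_singleton.preimage hfc
    have hZopen : IsOpen {x | f.1 x = 0} := by
      have : {x | f.1 x = 0} = (f.1 ⁻¹' (Set.range f.1 \ {0}))ᶜ := by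
        ext x
        simp [Set.mem_preimage, Set.mem_range_self]
      rw [this]
      exact ((f.2.2.diff (t := {0})).isClosed.preimage hfc).isOpen_compl
    have hZ : IsClopen {x | f.1 x = 0} := ⟨hZclosed, hZopen⟩
    -- the idempotent e
    set e : X → R := fun x => if f.1 x = 0 then 0 else 1 with he
    have hecont : Continuous e := by
      apply Continuous.if _ continuous_const continuous_const
      intro a ha
      rw [hZ.frontier_eq] at ha
      exact absurd ha (Set.notMem_empty a)
    have heC : e ∈ Cfin X R := by
      refine ⟨hecont, ((Set.finite_singleton (1:R)).insert 0).subset ?_⟩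
      rintro _ ⟨x, rfl⟩
      by_cases h : f.1 x = 0 <;> simp [he, h]
    have h0 : (⟨e, heC⟩ : Cfin X R) ∈ vanIdeal X R K₀ := by
      intro x hx
      have : f.1 x = 0 := hf x (Or.inl hx)
      simp [he, this]
    have h1 : f ∈ vanIdeal X R K₁ := fun x hx => hf x (Or.inr hx)
    have key : f = (⟨e, heC⟩ : Cfin X R) * f := by
      apply Subtype.ext
      funext x
      show f.1 x = e x * f.1 x
      by_cases h : f.1 x = 0 <;> simp [he, h]
    rw [key]
    exact Ideal.mul_mem_mul h0 h1
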